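/- If π : M → M'' is a couniform projection of finite-length Λ-modules (i.e. M'' = M/X and M/X' is indecomposable for every submodule X' ⊆ X) and M'' is accessible, then M is accessible. -/
import Mathlib



universe u v

/-- A module is indecomposable: nonzero and with no nontrivial direct decomposition. -/
def Indec (Λ : Type*) [Ring Λ] (M : Type*) [AddCommGroup M] [Module Λ M] : Prop :=
  Nontrivial M ∧ ∀ A B : Submodule Λ M, IsCompl A B → A = ⊥ ∨ B = ⊥

/-- Accessible modules, defined inductively: simple modules are accessible, and an
indecomposable module is accessible provided it has a maximal submodule (i.e. a
submodule of length one less) which is accessible, or a simple submodule whose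
quotient (a factor module of length one less) is accessible. -/
inductive Accessible (Λ : Type u) [Ring Λ] : (M : Type v) → [AddCommGroup M] → [Module Λ M] → Prop where
  | of_simple {M : Type v} [AddCommGroup M] [Module Λ M] :
      IsSimpleModule Λ M → Accessible Λ M
  | of_submodule {M : Type v} [AddCommGroup M] [Module Λ M] (N : Submodule Λ M) :
      Indec Λ M → IsCoatom N → Accessible Λ N → Accessible Λ M
  | of_quotient {M : Type v} [AddCommGroup M] [Module Λ M] (N : Submodule Λ M) :
      Indec Λ M → IsAtom N → Accessible Λ (M ⧸ N) → Accessible Λ M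

private lemma isCompl_orderIso {α β : Type*} [Lattice α] [BoundedOrder α] [Lattice β]
    [BoundedOrder β] (f : α ≃o β) {a b : α} (h : IsCompl a b) : IsCompl (f a) (f b) := by
  constructor
  · rw [disjoint_iff, ← f.map_inf, h.inf_eq_bot, f.map_bot]
  · rw [codisjoint_iff, ← f.map_sup, h.sup_eq_top, f.map_top]

private lemma Indec.congr {Λ : Type u} [Ring Λ] {M N : Type v} [AddCommGroup M] [Module Λ M]
    [AddCommGroup N] [Module Λ N] (e : M ≃ₗ[Λ] N) (h : Indec Λ M) : Indec Λ N := by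
  obtain ⟨hnt, hd⟩ := h
  refine ⟨e.symm.toEquiv.nontrivial, fun A B hAB => ?_⟩
  set oi := Submodule.orderIsoMapComap e.symm with hoi
  rcases hd (oi A) (oi B) (isCompl_orderIso oi hAB) with h | h
  · exact Or.inl (oi.injective (by rw [h, oi.map_bot]))
  · exact Or.inr (oi.injective (by rw [h, oi.map_bot]))

private lemma Accessible.congr {Λ : Type u} [Ring Λ] {M : Type v} [AddCommGroup M] [Module Λ M]
    (h : Accessible Λ M) :
    ∀ (N : Type v) [AddCommGroup N] [Module Λ N], (M ≃ₗ[Λ] N) → Accessible Λ N := by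
  induction h with
  | of_simple hs =>
      intro N _ _ e
      exact .of_simple (IsSimpleModule.congr e.symm)
  | of_submodule P hi hc _ ih =>
      intro N _ _ e
      refine .of_submodule (P.map (e : _ →ₗ[Λ] _)) (hi.congr e) ?_ (ih _ (e.submoduleMap P))
      have := (Submodule.orderIsoMapComap e).isCoatom_iff P
      simpa [Submodule.orderIsoMapComap] using this.mpr hc
  | of_quotient P hi ha _ ih =>
      intro N _ _ e
      refine .of_quotient (P.map (e : _ →ₗ[Λ] _)) (hi.congr e) ?_
        (ih _ (Submodule.Quotient.equiv P _ e rfl))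
      have := (Submodule.orderIsoMapComap e).isAtom_iff P
      simpa [Submodule.orderIsoMapComap] using this.mpr ha

/-- If `π : M → M/X` is a couniform projection (that is, `M/X'` is indecomposable
for every submodule `X' ⊆ X`) of finite-length modules and `M/X` is accessible,
then `M` is accessible. -/
theorem accessible_of_couniform_projection
    (Λ : Type u) [Ring Λ] (M : Type v) [AddCommGroup M] [Module Λ M]
    (hfl : IsFiniteLength Λ M)
    (X : Submodule Λ M)
    (hcouniform : ∀ X' : Submodule Λ M, X' ≤ X → Indec Λ (M ⧸ X'))
    (hacc : Accessible Λ (M ⧸ X)) :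
    Accessible Λ M := by
  obtain ⟨hnoe, hart⟩ := isFiniteLength_iff_isNoetherian_isArtinian.mp hfl
  have key : ∀ Y : Submodule Λ M, Y ≤ X → Accessible Λ (M ⧸ Y) := by
    have wf : WellFounded ((· > ·) : Submodule Λ M → Submodule Λ M → Prop) :=
      wellFounded_gt
    intro Y
    refine wf.induction (C := fun Y => Y ≤ X → Accessible Λ (M ⧸ Y)) Y ?_
    intro Y ih hY
    rcases eq_or_lt_of_le hY with rfl | hlt
    · exact hacc
    · obtain ⟨Y', hcov, hY'X⟩ := hlt.exists_covby_le
      have hacc' : Accessible Λ (M ⧸ Y') := ih Y' hcov.lt hY'X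
      have hmapbot : Submodule.map Y.mkQ Y = ⊥ := by
        rw [← le_bot_iff, Submodule.map_le_iff_le_comap, Submodule.comap_bot,
          Submodule.ker_mkQ]
      have hatom : IsAtom (Submodule.map Y.mkQ Y') := by
        constructor
        · intro h
          have : Y' ≤ Y := by
            have h2 : Y' ≤ Submodule.comap Y.mkQ (Submodule.map Y.mkQ Y') :=
              Submodule.le_comap_map _ _
            rwa [h, Submodule.comap_bot, Submodule.ker_mkQ] at h2
          exact hcov.lt.not_ge this
        · intro Z hZ
          have hZeq : Submodule.map Y.mkQ (Submodule.comap Y.mkQ Z) = Z :=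
            Submodule.map_comap_eq_of_surjective (Submodule.mkQ_surjective Y) Z
          have hYle : Y ≤ Submodule.comap Y.mkQ Z := by
            have := Submodule.comap_mono (f := Y.mkQ) (bot_le (a := Z))
            simpa using this
          have hle : Submodule.comap Y.mkQ Z ≤ Y' := by
            have := Submodule.comap_mono (f := Y.mkQ) hZ.le
            rw [Submodule.comap_map_mkQ, sup_eq_right.mpr hcov.le] at this
            exact this
          have hne : Submodule.comap Y.mkQ Z ≠ Y' := by
            intro h
            rw [h] at hZeq
            exact hZ.ne hZeq.symm
          have : Submodule.comap Y.mkQ Z = Y := by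
            by_contra hne2
            exact hcov.2 (lt_of_le_of_ne hYle (Ne.symm hne2)) (lt_of_le_of_ne hle hne)
          rw [← hZeq, this, hmapbot]
      refine .of_quotient (Submodule.map Y.mkQ Y') (hcouniform Y hY) hatom ?_
      exact Accessible.congr hacc' _
        (Submodule.quotientQuotientEquivQuotient Y Y' hcov.le).symm
  exact Accessible.congr (key ⊥ bot_le) M ((⊥ : Submodule Λ M).quotEquivOfEqBot rfl)
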